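/- Tangency condition for the two arcs of a biarc: Let c > 0, α, β ∈ ℝ, and a, b ∈ ℝ with a ≠ 0 and b ≠ 0; set ω = (α + β)/2. Let O₁ = (−c, 0) + (1/a)·(−sin α, cos α) be the center of the circle of signed curvature a passing through (−c, 0) with tangent direction (cos α, sin α), and let O₂ = (c, 0) + (1/b)·(−sin β, cos β) be the center of the circle of signed curvature b passing through (c, 0) with tangent direction (cos β, sin β). Then ‖O₁ − O₂‖² − (1/a − 1/b)² = (4/(a·b))·((a·c + sin α)·(b·c − sin β) + sin² ω). In particular, the two circles satisfy the internal tangency relation ‖O₁ − O₂‖ = |1/a − 1/b| if and only if (a·c + sin α)·(b·c − sin β) + sin² ω = 0. -/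

import Mathlib

/-- The point of the Euclidean plane with coordinates `(x, y)`. -/
noncomputable def pt2 (x y : ℝ) : EuclideanSpace ℝ (Fin 2) :=
  (WithLp.equiv 2 (Fin 2 → ℝ)).symm ![x, y]

/-- Tangency condition for the two arcs of a biarc: with
`O₁ = (−c,0) + (1/a)·(−sin α, cos α)` and `O₂ = (c,0) + (1/b)·(−sin β, cos β)`,
one has `‖O₁ − O₂‖² − (1/a − 1/b)² = (4/(ab))·((ac + sin α)(bc − sin β) + sin² ω)`
where `ω = (α + β)/2`; in particular the internal tangency relation
`‖O₁ − O₂‖ = |1/a − 1/b|` holds iff `(ac + sin α)(bc − sin β) + sin² ω = 0`. -/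
theorem biarc_tangency_condition (c α β a b : ℝ) (hc : 0 < c)
    (ha : a ≠ 0) (hb : b ≠ 0)
    (ω : ℝ) (hω : ω = (α + β) / 2)
    (O₁ O₂ : EuclideanSpace ℝ (Fin 2))
    (hO₁ : O₁ = pt2 (-c) 0 + (1 / a) • pt2 (-Real.sin α) (Real.cos α))
    (hO₂ : O₂ = pt2 c 0 + (1 / b) • pt2 (-Real.sin β) (Real.cos β)) :
    ‖O₁ - O₂‖ ^ 2 - (1 / a - 1 / b) ^ 2 =
      4 / (a * b) * ((a * c + Real.sin α) * (b * c - Real.sin β) + Real.sin ω ^ 2) ∧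
    (‖O₁ - O₂‖ = |1 / a - 1 / b| ↔
      (a * c + Real.sin α) * (b * c - Real.sin β) + Real.sin ω ^ 2 = 0) := by
  have key : ‖O₁ - O₂‖ ^ 2 =
      (-c + (1/a) * (-Real.sin α) - (c + (1/b) * (-Real.sin β))) ^ 2
      + ((1/a) * Real.cos α - (1/b) * Real.cos β) ^ 2 := by
    rw [← real_inner_self_eq_norm_sq]
    subst hO₁ hO₂
    rw [real_inner_self_eq_norm_sq, EuclideanSpace.norm_eq, Real.sq_sqrt (by positivity)]
    simp [pt2, Fin.sum_univ_two]
  have hsin : Real.sin ω ^ 2 = (1 - Real.cos (α + β)) / 2 := by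
    rw [hω, Real.sin_sq_eq_half_sub]
    rw [show 2 * ((α + β) / 2) = α + β by ring]
    ring
  have hmain : ‖O₁ - O₂‖ ^ 2 - (1 / a - 1 / b) ^ 2 =
      4 / (a * b) * ((a * c + Real.sin α) * (b * c - Real.sin β) + Real.sin ω ^ 2) := by
    rw [key, hsin, Real.cos_add]
    have hsa := Real.sin_sq_add_cos_sq α
    have hsb := Real.sin_sq_add_cos_sq β
    field_simp
    linear_combination (2*b^2)*hsa + (2*a^2)*hsb
  refine ⟨hmain, ?_⟩
  constructor
  · intro h
    have h2 : ‖O₁ - O₂‖ ^ 2 = (1 / a - 1 / b) ^ 2 := by rw [h, sq_abs]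
    have : 4 / (a * b) * ((a * c + Real.sin α) * (b * c - Real.sin β) + Real.sin ω ^ 2) = 0 := by
      rw [← hmain, h2]; ring
    have h4 : 4 / (a * b) ≠ 0 := by positivity
    exact (mul_eq_zero.mp this).resolve_left h4
  · intro h
    have h2 : ‖O₁ - O₂‖ ^ 2 = (1 / a - 1 / b) ^ 2 := by
      have := hmain; rw [h, mul_zero] at this; linarith
    calc ‖O₁ - O₂‖ = Real.sqrt (‖O₁ - O₂‖ ^ 2) := (Real.sqrt_sq (norm_nonneg _)).symm
      _ = |1 / a - 1 / b| := by rw [h2, Real.sqrt_sq_eq_abs]
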